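/- Let s ∈ (0,1), α ∈ (0,1), c > 0. For d > 1/2 and ε > 0 define f(d) := (2/s)[ 2 d^{−s} − (d − 1/2)^{−s} − (d + 1/2)^{−s} ] + (c ε/(1−α))[ 2 d^{1−α} − (d − 1/2)^{1−α} − (d + 1/2)^{1−α} ], and set d_ε := ((1+s)/(c α ε))^{1/(1+s−α)}. Then there exists ε̄ = ε̄(s, α, c) > 0 such that for every ε ∈ (0, ε̄) one has f(d_ε) ≤ −(c α ε / 8) · d_ε^{−1−α} < 0. -/

import Mathlib

open Set Filter Topology

noncomputable section

/-- Auxiliary limit: `((1-u)^p + (1+u)^p - 2)/u² → p(p-1)` as `u → 0⁺`. -/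
lemma stmt15_limA (p : ℝ) :
    Tendsto (fun u : ℝ => ((1-u)^p + (1+u)^p - 2)/u^2) (𝓝[>] (0:ℝ))
      (𝓝 (p*(p-1))) := by
  have hmem : Ioo (0:ℝ) 1 ∈ 𝓝[>] (0:ℝ) := by
    apply Ioo_mem_nhdsGT_of_mem; exact ⟨le_refl _, one_pos⟩
  have hff' : ∀ᶠ u in 𝓝[>] (0:ℝ),
      HasDerivAt (fun u : ℝ => (1-u)^p + (1+u)^p - 2)
        (p*(1+u)^(p-1) - p*(1-u)^(p-1)) u := by
    filter_upwards [hmem] with u hu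
    have h1 : (1:ℝ) - u ≠ 0 := by nlinarith [hu.1, hu.2]
    have h2 : (1:ℝ) + u ≠ 0 := by nlinarith [hu.1, hu.2]
    have d1 : HasDerivAt (fun u : ℝ => (1-u)^p) (p*(1-u)^(p-1) * (-1)) u := by
      have := (Real.hasDerivAt_rpow_const (x := 1-u) (p := p) (Or.inl h1))
      exact this.comp u ((hasDerivAt_id u).const_sub 1)
    have d2 : HasDerivAt (fun u : ℝ => (1+u)^p) (p*(1+u)^(p-1) * 1) u := by
      have := (Real.hasDerivAt_rpow_const (x := 1+u) (p := p) (Or.inl h2))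
      exact this.comp u ((hasDerivAt_id u).const_add 1)
    have := (d1.add d2).sub_const 2
    exact this.congr_deriv (by ring)
  have hgg' : ∀ᶠ u in 𝓝[>] (0:ℝ), HasDerivAt (fun u : ℝ => u^2) (2*u) u := by
    filter_upwards with u
    simpa using (hasDerivAt_pow 2 u)
  have hg' : ∀ᶠ u in 𝓝[>] (0:ℝ), 2*u ≠ 0 := by
    filter_upwards [self_mem_nhdsWithin] with u hu
    have : (0:ℝ) < u := hu
    positivity
  have hfa : Tendsto (fun u : ℝ => (1-u)^p + (1+u)^p - 2) (𝓝[>] (0:ℝ)) (𝓝 0) := by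
    have : ContinuousWithinAt (fun u : ℝ => (1-u)^p + (1+u)^p - 2) (Ioi 0) 0 := by
      apply ContinuousWithinAt.sub
      apply ContinuousWithinAt.add
      · exact ((Real.continuousAt_rpow_const _ _ (Or.inl (by norm_num))).comp
          (continuous_const.sub continuous_id).continuousAt).continuousWithinAt
      · exact ((Real.continuousAt_rpow_const _ _ (Or.inl (by norm_num))).comp
          (continuous_const.add continuous_id).continuousAt).continuousWithinAt
      · exact continuousWithinAt_const
    have h := this.tendsto
    norm_num at h
    exact h
  have hga : Tendsto (fun u : ℝ => u^2) (𝓝[>] (0:ℝ)) (𝓝 0) := by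
    have : ContinuousAt (fun u : ℝ => u^2) 0 := by fun_prop
    simpa using this.continuousWithinAt.tendsto
  have hdiv : Tendsto (fun u => (p*(1+u)^(p-1) - p*(1-u)^(p-1))/(2*u)) (𝓝[>] (0:ℝ))
      (𝓝 (p*(p-1))) := by
    have dphi : HasDerivAt (fun u : ℝ => p*(1+u)^(p-1) - p*(1-u)^(p-1))
        (2*(p*(p-1))) 0 := by
      have d2 : HasDerivAt (fun u : ℝ => (1+u)^(p-1)) ((p-1)*(1+(0:ℝ))^(p-1-1) * 1) 0 := by
        have := (Real.hasDerivAt_rpow_const (x := 1+(0:ℝ)) (p := p-1) (Or.inl (by norm_num)))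
        exact this.comp 0 ((hasDerivAt_id 0).const_add 1)
      have d1 : HasDerivAt (fun u : ℝ => (1-u)^(p-1)) ((p-1)*(1-(0:ℝ))^(p-1-1) * (-1)) 0 := by
        have := (Real.hasDerivAt_rpow_const (x := 1-(0:ℝ)) (p := p-1) (Or.inl (by norm_num)))
        exact this.comp 0 ((hasDerivAt_id 0).const_sub 1)
      have := (d2.const_mul p).sub (d1.const_mul p)
      exact this.congr_deriv (by norm_num; ring)
    have hslope := hasDerivAt_iff_tendsto_slope.mp dphi
    have hslope' : Tendsto (slope (fun u : ℝ => p*(1+u)^(p-1) - p*(1-u)^(p-1)) 0)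
        (𝓝[>] (0:ℝ)) (𝓝 (2*(p*(p-1)))) :=
      hslope.mono_left (nhdsWithin_mono _ (fun x hx => ne_of_gt hx))
    have := hslope'.div_const 2
    rw [show 2*(p*(p-1))/2 = p*(p-1) by ring] at this
    apply this.congr'
    filter_upwards [self_mem_nhdsWithin] with u hu
    have hu0 : u ≠ 0 := ne_of_gt hu
    rw [slope_def_field]
    have h0 : p * ((1:ℝ) + 0) ^ (p-1) - p * ((1:ℝ) - 0) ^ (p-1) = 0 := by norm_num
    rw [h0, sub_zero, sub_zero, div_div, mul_comm u 2]
  exact HasDerivAt.lhopital_zero_nhdsGT hff' hgg' hg' hfa hga hdiv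

/-- Auxiliary limit: `d^{2-p}(2d^p - (d-1/2)^p - (d+1/2)^p) → -p(p-1)/4` as `d → ∞`. -/
lemma stmt15_limB (p : ℝ) :
    Tendsto (fun d : ℝ => d^((2:ℝ)-p) * (2*d^p - (d-1/2)^p - (d+1/2)^p)) atTop
      (𝓝 (-(p*(p-1))/4)) := by
  have hu : Tendsto (fun d : ℝ => 1/(2*d)) atTop (𝓝[>] (0:ℝ)) := by
    rw [tendsto_nhdsWithin_iff]
    constructor
    · exact tendsto_const_nhds.div_atTop (tendsto_id.const_mul_atTop two_pos)
    · filter_upwards [eventually_gt_atTop (0:ℝ)] with d hd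
      have : (0:ℝ) < 2*d := by positivity
      exact one_div_pos.mpr this
  have T1 := (stmt15_limA p).comp hu
  have T2 := T1.const_mul (-(1/4):ℝ)
  have heq : -(1/4:ℝ) * (p*(p-1)) = -(p*(p-1))/4 := by ring
  rw [heq] at T2
  apply T2.congr'
  filter_upwards [eventually_ge_atTop (1:ℝ)] with d hd
  have hd0 : (0:ℝ) < d := lt_of_lt_of_le one_pos hd
  have hdne : d ≠ 0 := ne_of_gt hd0
  have hx0 : (0:ℝ) < 1/(2*d) := by positivity
  have hx1 : 1/(2*d) ≤ 1/2 := by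
    apply div_le_div_of_nonneg_left one_pos.le two_pos
    linarith
  have h1m : (0:ℝ) ≤ 1 - 1/(2*d) := by linarith
  have h1p : (0:ℝ) ≤ 1 + 1/(2*d) := by linarith
  have e1 : d - 1/2 = d * (1 - 1/(2*d)) := by field_simp
  have e2 : d + 1/2 = d * (1 + 1/(2*d)) := by field_simp
  have r1 : (d - 1/2)^p = d^p * (1 - 1/(2*d))^p := by
    rw [e1, Real.mul_rpow hd0.le h1m]
  have r2 : (d + 1/2)^p = d^p * (1 + 1/(2*d))^p := by
    rw [e2, Real.mul_rpow hd0.le h1p]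
  have r3 : d^((2:ℝ)-p) * d^p = d^(2:ℝ) := by
    rw [← Real.rpow_add hd0]; norm_num
  have r4 : d^(2:ℝ) = d^2 := by
    rw [show (2:ℝ) = ((2:ℕ):ℝ) by norm_num, Real.rpow_natCast]
  show -(1/4:ℝ) * (((1-1/(2*d))^p + (1+1/(2*d))^p - 2)/(1/(2*d))^2)
      = d^((2:ℝ)-p) * (2*d^p - (d-1/2)^p - (d+1/2)^p)
  rw [r1, r2, show 2*d^p - d^p * (1-1/(2*d))^p - d^p * (1+1/(2*d))^p
      = d^p * (2 - (1-1/(2*d))^p - (1+1/(2*d))^p) by ring,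
    ← mul_assoc, r3, r4]
  field_simp
  ring

/-- The function `f(d) = ζ_E(1/2) - ζ_E(0)` computed explicitly for
`E = (0,1/2) ∪ (d,d+1/2)`. -/
def fEL (s α c ε d : ℝ) : ℝ :=
  (2 / s) * (2 * d ^ (-s) - (d - 1 / 2) ^ (-s) - (d + 1 / 2) ^ (-s))
    + (c * ε / (1 - α)) *
        (2 * d ^ (1 - α) - (d - 1 / 2) ^ (1 - α) - (d + 1 / 2) ^ (1 - α))

/-- With `d_ε = ((1+s)/(cαε))^{1/(1+s-α)}`, for all sufficiently small
`ε > 0` one has `f(d_ε) ≤ -(cαε/8) d_ε^{-1-α} < 0`. -/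
theorem stmt15 (s α c : ℝ) (hs : s ∈ Ioo (0 : ℝ) 1) (hα : α ∈ Ioo (0 : ℝ) 1) (hc : 0 < c) :
    ∃ εbar : ℝ, 0 < εbar ∧ ∀ ε ∈ Ioo (0 : ℝ) εbar,
      fEL s α c ε (((1 + s) / (c * α * ε)) ^ (1 / (1 + s - α)))
          ≤ -(c * α * ε / 8) * (((1 + s) / (c * α * ε)) ^ (1 / (1 + s - α))) ^ (-1 - α) ∧
      fEL s α c ε (((1 + s) / (c * α * ε)) ^ (1 / (1 + s - α))) < 0 := by
  obtain ⟨hs0, hs1⟩ := hs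
  obtain ⟨hα0, hα1⟩ := hα
  have hq : (0:ℝ) < 1+s-α := by linarith
  have hαne : α ≠ 0 := ne_of_gt hα0
  have h1αne : (1:ℝ) - α ≠ 0 := by intro h; linarith [sub_eq_zero.mp h]
  have hsne : s ≠ 0 := ne_of_gt hs0
  set D : ℝ → ℝ := fun ε => ((1 + s) / (c * α * ε)) ^ (1 / (1 + s - α)) with hD
  -- D tends to infinity
  have hDtop : Tendsto D (𝓝[>] (0:ℝ)) atTop := by
    have hbase : Tendsto (fun ε : ℝ => c*α*ε) (𝓝[>] (0:ℝ)) (𝓝[>] (0:ℝ)) := by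
      rw [tendsto_nhdsWithin_iff]
      constructor
      · have : Tendsto (fun ε : ℝ => c*α*ε) (𝓝 0) (𝓝 (c*α*0)) :=
          Continuous.tendsto (by fun_prop) 0
        norm_num at this
        exact this.mono_left nhdsWithin_le_nhds
      · filter_upwards [self_mem_nhdsWithin] with ε (hε : (0:ℝ) < ε)
        have : (0:ℝ) < c*α*ε := by positivity
        exact this
    have h3 : Tendsto (fun ε : ℝ => (1+s)/(c*α*ε)) (𝓝[>] (0:ℝ)) atTop := by
      simp only [div_eq_mul_inv]
      exact hbase.inv_tendsto_nhdsGT_zero.const_mul_atTop (by linarith)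
    exact (tendsto_rpow_atTop (by positivity)).comp h3
  -- the two rescaled limits
  have hA := (stmt15_limB (-s)).comp hDtop
  have hB := (stmt15_limB (1-α)).comp hDtop
  -- the combined limit
  have hG : Tendsto (fun ε =>
      (2/s) * ((D ε)^((2:ℝ)-(-s)) * (2*(D ε)^(-s) - (D ε-1/2)^(-s) - (D ε+1/2)^(-s)))
      + ((1+s)/(α*(1-α))) *
        ((D ε)^((2:ℝ)-(1-α)) * (2*(D ε)^(1-α) - (D ε-1/2)^(1-α) - (D ε+1/2)^(1-α))))
      (𝓝[>] (0:ℝ)) (𝓝 (-(1+s)/4)) := by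
    have h := (hA.const_mul (2/s)).add (hB.const_mul ((1+s)/(α*(1-α))))
    have hval : (2/s) * (-((-s)*(-s-1))/4) + ((1+s)/(α*(1-α))) * (-((1-α)*((1-α)-1))/4)
        = -(1+s)/4 := by field_simp; ring
    rw [hval] at h
    exact h
  have hlt : -(1+s)/4 < -(1+s)/8 := by linarith
  have hev := hG.eventually_lt_const hlt
  rw [eventually_iff, mem_nhdsGT_iff_exists_Ioo_subset] at hev
  obtain ⟨u, hu, hsub⟩ := hev
  refine ⟨u, hu, ?_⟩
  intro ε hε
  have hGε := hsub hε
  simp only [mem_setOf_eq] at hGε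
  have hε0 : (0:ℝ) < ε := hε.1
  have hDpos : (0:ℝ) < D ε := by
    apply Real.rpow_pos_of_pos
    positivity
  have hDq : (D ε)^((1:ℝ)+s-α) = (1+s)/(c*α*ε) := by
    rw [hD]
    show (((1 + s) / (c * α * ε)) ^ (1/(1+s-α))) ^ ((1:ℝ)+s-α) = (1+s)/(c*α*ε)
    rw [← Real.rpow_mul (by positivity), one_div,
      inv_mul_cancel₀ (ne_of_gt hq), Real.rpow_one]
  have hcαε : c*α*ε * (D ε)^((1:ℝ)+s-α) = 1+s := by
    rw [hDq]; field_simp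
  have ex1 : (D ε)^((2:ℝ)-(-s)) = (D ε)^((s:ℝ)+2) := by congr 1; ring
  have ex2 : (D ε)^((2:ℝ)-(1-α)) = (D ε)^((1:ℝ)+α) := by congr 1; ring
  have e7 : (D ε)^((s:ℝ)+2) = (D ε)^((1:ℝ)+s-α) * (D ε)^((1:ℝ)+α) := by
    rw [← Real.rpow_add hDpos]; congr 1; ring
  have e8 : c*ε*(D ε)^((s:ℝ)+2) = ((1+s)/α) * (D ε)^((1:ℝ)+α) := by
    rw [← hcαε, e7]; field_simp
  have key : (D ε)^((s:ℝ)+2) * fEL s α c ε (D ε)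
      = (2/s) * ((D ε)^((2:ℝ)-(-s)) *
          (2*(D ε)^(-s) - (D ε-1/2)^(-s) - (D ε+1/2)^(-s)))
        + ((1+s)/(α*(1-α))) * ((D ε)^((2:ℝ)-(1-α)) *
          (2*(D ε)^(1-α) - (D ε-1/2)^(1-α) - (D ε+1/2)^(1-α))) := by
    simp only [fEL]
    rw [ex1, ex2, show (1+s)/(α*(1-α)) = (1+s)/α/(1-α) from (div_div _ _ _).symm]
    linear_combination ((2*(D ε)^(1-α) - (D ε-1/2)^(1-α) - (D ε+1/2)^(1-α))/(1-α)) * e8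
  have h1 : (D ε)^((s:ℝ)+2) * fEL s α c ε (D ε) ≤ -(1+s)/8 := by
    rw [key]; exact le_of_lt hGε
  have e5a : (D ε)^((s:ℝ)+2) * (D ε)^(-1-α) = (D ε)^((1:ℝ)+s-α) := by
    rw [← Real.rpow_add hDpos]; congr 1; ring
  have e5 : (D ε)^((s:ℝ)+2) * (-(c*α*ε/8) * (D ε)^(-1-α)) = -(1+s)/8 := by
    calc (D ε)^((s:ℝ)+2) * (-(c*α*ε/8) * (D ε)^(-1-α))
        = -(c*α*ε*((D ε)^((s:ℝ)+2) * (D ε)^(-1-α)))/8 := by ring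
      _ = -(c*α*ε*((D ε)^((1:ℝ)+s-α)))/8 := by rw [e5a]
      _ = -(1+s)/8 := by rw [hcαε]
  rw [← e5] at h1
  have hle : fEL s α c ε (D ε) ≤ -(c*α*ε/8) * (D ε)^(-1-α) :=
    le_of_mul_le_mul_left h1 (Real.rpow_pos_of_pos hDpos _)
  have hneg : -(c*α*ε/8) * (D ε)^(-1-α) < 0 := by
    have h9 := Real.rpow_pos_of_pos hDpos (-1-α)
    have h10 : (0:ℝ) < c*α*ε := by positivity
    nlinarith
  exact ⟨hle, lt_of_le_of_lt hle hneg⟩
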